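/- Let π : G → H be a homomorphism of abelian groups, let X₁, X₂ be random variables taking values in finite subsets of G, and set Y₁ := π(X₁), Y₂ := π(X₂). Then d_ent(X₁, X₂) ≥ d_ent(Y₁, Y₂) + Σ_{y₁, y₂ ∈ H} p_{Y₁}(y₁) p_{Y₂}(y₂) d_ent((X₁ | Y₁ = y₁), (X₂ | Y₂ = y₂)), where the sum ranges over pairs (y₁, y₂) with p_{Y₁}(y₁), p_{Y₂}(y₂) > 0. In particular d_ent(X₁, X₂) ≥ d_ent(Y₁, Y₂), and σ_ent[π(X)] ≤ σ_ent[X] for any random variable X taking values in a finite subset of G. -/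

import Mathlib

open Finset

noncomputable section

/-- `IsPMF p`: the finitely supported function `p` is a probability mass function,
modelling the distribution of a random variable taking values in a finite subset. -/
def IsPMF {G : Type*} (p : G →₀ ℝ) : Prop :=
  (∀ x, 0 ≤ p x) ∧ ∑ x ∈ p.support, p x = 1

/-- Shannon entropy `H(X)` of a random variable with distribution `p`. -/
def ent {G : Type*} (p : G →₀ ℝ) : ℝ :=
  ∑ x ∈ p.support, Real.negMulLog (p x)

/-- The joint distribution of a pair of independent random variables with
distributions `p` and `q`. -/
def prodPMF {G H : Type*} (p : G →₀ ℝ) (q : H →₀ ℝ) : (G × H) →₀ ℝ :=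
  Finsupp.onFinset (p.support ×ˢ q.support) (fun z => p z.1 * q z.2)
    (fun _z hz => Finset.mem_product.2
      ⟨Finsupp.mem_support_iff.2 (left_ne_zero_of_mul hz),
       Finsupp.mem_support_iff.2 (right_ne_zero_of_mul hz)⟩)

/-- The distribution of `X - Y`, where `X, Y` are independent with distributions `p, q`. -/
def subDist {G : Type*} [AddCommGroup G] (p q : G →₀ ℝ) : G →₀ ℝ :=
  Finsupp.mapDomain (fun z : G × G => z.1 - z.2) (prodPMF p q)

/-- The distribution of `X + Y`, where `X, Y` are independent with distributions `p, q`. -/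
def sumDist {G : Type*} [AddCommGroup G] (p q : G →₀ ℝ) : G →₀ ℝ :=
  Finsupp.mapDomain (fun z : G × G => z.1 + z.2) (prodPMF p q)

/-- The entropic Ruzsa distance `d_ent(X, Y) = H(X' - Y') - H(X)/2 - H(Y)/2`,
where `X', Y'` are independent copies of `X ~ p`, `Y ~ q`. -/
def dEnt {G : Type*} [AddCommGroup G] (p q : G →₀ ℝ) : ℝ :=
  ent (subDist p q) - ent p / 2 - ent q / 2

/-- The entropic doubling constant `σ_ent[X] = exp(H(X₁ + X₂) - H(X))`
for independent copies `X₁, X₂` of `X ~ p`. -/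
def sigmaEnt {G : Type*} [AddCommGroup G] (p : G →₀ ℝ) : ℝ :=
  Real.exp (ent (sumDist p p) - ent p)

/-- First marginal of a joint distribution on `G × H`. -/
def fstMarg {G H : Type*} (w : (G × H) →₀ ℝ) : G →₀ ℝ :=
  Finsupp.mapDomain Prod.fst w

/-- Second marginal of a joint distribution on `G × H`. -/
def sndMarg {G H : Type*} (w : (G × H) →₀ ℝ) : H →₀ ℝ :=
  Finsupp.mapDomain Prod.snd w

/-- The maximal entropic Ruzsa distance `d*_ent(X, Y)`: the supremum of
`H(X' - Y') - H(X)/2 - H(Y)/2` over all couplings `(X', Y')` of `X ~ p` and `Y ~ q`. -/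
def dEntStar {G : Type*} [AddCommGroup G] (p q : G →₀ ℝ) : ℝ :=
  sSup { d : ℝ | ∃ w : (G × G) →₀ ℝ, IsPMF w ∧ fstMarg w = p ∧ sndMarg w = q ∧
    d = ent (Finsupp.mapDomain (fun z : G × G => z.1 - z.2) w) - ent p / 2 - ent q / 2 }

/-- The uniform distribution on a finite set `A`. -/
def unif {G : Type*} [DecidableEq G] (A : Finset G) : G →₀ ℝ :=
  Finsupp.onFinset A (fun x => if x ∈ A then ((A.card : ℝ))⁻¹ else 0)
    (fun x hx => by by_contra h; exact hx (if_neg h))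

/-- The distribution of `X` conditioned on the event `π(X) = y`, where `X ~ p`. -/
def condFiber {G H : Type*} [DecidableEq H] (π : G → H) (y : H) (p : G →₀ ℝ) : G →₀ ℝ :=
  Finsupp.onFinset p.support
    (fun x => if π x = y then p x / (Finsupp.mapDomain π p) y else 0)
    (fun x hx => Finsupp.mem_support_iff.2 (fun h0 => hx (by (try simp only []); split_ifs <;> simp [h0])))

/-- The entropy `h(p)` of the Bernoulli distribution with parameter `p`. -/
def binEnt (p : ℝ) : ℝ := Real.negMulLog p + Real.negMulLog (1 - p)

/-- Skew-dimension bound: `skewDimLE A r` means the skew-dimension of `A ⊆ ℤ^D`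
is at most `r`. -/
def skewDimLE {D : ℕ} : Finset (Fin D → ℤ) → ℕ → Prop
  | A, 0 => A.card ≤ 1
  | A, r + 1 => A.card ≤ 1 ∨ ∃ i : Fin D, ∀ n : ℤ,
      skewDimLE (A.filter fun v => v i = n) r

/-- The (affine) dimension of a finite subset `A ⊆ ℤ^D`: the dimension of the
real span of `A - A`. -/
def dimAff {D : ℕ} (A : Finset (Fin D → ℤ)) : ℕ :=
  Module.finrank ℝ (Submodule.span ℝ
    { x : Fin D → ℝ | ∃ a ∈ A, ∃ b ∈ A, x = fun i => ((a i : ℝ) - (b i : ℝ)) })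


/-! ### Auxiliary development for statement5 -/

section AuxStatement5

open Finsupp

variable {G' H' : Type*}

/-- Generalized binary-operation distribution. -/
def opDist (f : G' → G' → G') (p q : G' →₀ ℝ) : G' →₀ ℝ :=
  Finsupp.mapDomain (fun z : G' × G' => f z.1 z.2) (prodPMF p q)

lemma subDist_eq_opDist {G : Type*} [AddCommGroup G] (p q : G →₀ ℝ) :
    subDist p q = opDist (fun a b => a - b) p q := rfl

lemma sumDist_eq_opDist {G : Type*} [AddCommGroup G] (p q : G →₀ ℝ) :
    sumDist p q = opDist (fun a b => a + b) p q := rfl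

lemma prodPMF_apply (p : G' →₀ ℝ) (q : H' →₀ ℝ) (z : G' × H') :
    prodPMF p q z = p z.1 * q z.2 := rfl

lemma prodPMF_support_subset (p : G' →₀ ℝ) (q : H' →₀ ℝ) :
    (prodPMF p q).support ⊆ p.support ×ˢ q.support :=
  Finsupp.support_onFinset_subset

lemma ent_eq_sum {p : G' →₀ ℝ} {s : Finset G'} (hs : p.support ⊆ s) :
    ent p = ∑ x ∈ s, Real.negMulLog (p x) :=
  Finset.sum_subset hs (fun x _ hx => by
    rw [Finsupp.notMem_support_iff.1 hx, Real.negMulLog_zero])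

lemma mass_eq_sum {p : G' →₀ ℝ} {s : Finset G'} (hs : p.support ⊆ s) :
    ∑ x ∈ p.support, p x = ∑ x ∈ s, p x :=
  Finset.sum_subset hs (fun x _ hx => Finsupp.notMem_support_iff.1 hx)

lemma mapDomain_apply_sum [DecidableEq H'] (f : G' → H') (p : G' →₀ ℝ)
    {s : Finset G'} (hs : p.support ⊆ s) (y : H') :
    Finsupp.mapDomain f p y = ∑ x ∈ s, if f x = y then p x else 0 := by
  classical
  rw [Finsupp.mapDomain, Finsupp.sum_apply, Finsupp.sum]
  rw [Finset.sum_subset hs (fun x _ hx => by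
    simp [Finsupp.notMem_support_iff.1 hx])]
  exact Finset.sum_congr rfl fun x _ => Finsupp.single_apply

lemma mapDomain_apply_nonneg {f : G' → H'} {p : G' →₀ ℝ} (hp : ∀ x, 0 ≤ p x) (y : H') :
    0 ≤ Finsupp.mapDomain f p y := by
  classical
  rw [mapDomain_apply_sum f p (le_refl p.support) y]
  exact Finset.sum_nonneg fun x _ => by split_ifs with h; exacts [hp x, le_rfl]

lemma le_mapDomain {f : G' → H'} {p : G' →₀ ℝ} (hp : ∀ x, 0 ≤ p x) (a : G') :
    p a ≤ Finsupp.mapDomain f p (f a) := by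
  classical
  rw [mapDomain_apply_sum f p (Finset.subset_insert a p.support) (f a)]
  have h := Finset.single_le_sum (f := fun x => if f x = f a then p x else 0)
    (fun x _ => by split_ifs with h; exacts [hp x, le_rfl])
    (Finset.mem_insert_self a p.support)
  simpa using h

lemma mapDomain_mass (f : G' → H') (p : G' →₀ ℝ) :
    ∑ y ∈ (Finsupp.mapDomain f p).support, Finsupp.mapDomain f p y
      = ∑ x ∈ p.support, p x := by
  classical
  have := Finsupp.sum_mapDomain_index (f := f) (s := p)
    (h := fun (_ : H') (v : ℝ) => v) (fun _ => rfl) (fun _ _ _ => rfl)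
  simpa [Finsupp.sum] using this

lemma IsPMF.mapDomain {f : G' → H'} {p : G' →₀ ℝ} (hp : IsPMF p) :
    IsPMF (Finsupp.mapDomain f p) := by
  exact ⟨mapDomain_apply_nonneg hp.1, by rw [mapDomain_mass]; exact hp.2⟩

lemma IsPMF.nonneg {p : G' →₀ ℝ} (hp : IsPMF p) (x : G') : 0 ≤ p x := hp.1 x

lemma IsPMF.prodPMF {p : G' →₀ ℝ} {q : H' →₀ ℝ} (hp : IsPMF p) (hq : IsPMF q) :
    IsPMF (prodPMF p q) := by
  classical
  constructor
  · exact fun z => mul_nonneg (hp.1 z.1) (hq.1 z.2)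
  · rw [mass_eq_sum (prodPMF_support_subset p q)]
    calc ∑ z ∈ p.support ×ˢ q.support, _root_.prodPMF p q z
        = (∑ a ∈ p.support, p a) * (∑ b ∈ q.support, q b) := by
          rw [Finset.sum_mul_sum]; rw [Finset.sum_product]; rfl
      _ = 1 := by rw [hp.2, hq.2, one_mul]

lemma IsPMF.opDist {f : G' → G' → G'} {p q : G' →₀ ℝ} (hp : IsPMF p) (hq : IsPMF q) :
    IsPMF (opDist f p q) :=
  (hp.prodPMF hq).mapDomain

lemma opDist_apply [DecidableEq G'] (f : G' → G' → G') (p q : G' →₀ ℝ) (x : G') :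
    opDist f p q x
      = ∑ z ∈ p.support ×ˢ q.support, if f z.1 z.2 = x then p z.1 * q z.2 else 0 := by
  rw [opDist, mapDomain_apply_sum _ _ (prodPMF_support_subset p q)]
  rfl

lemma ent_mapDomain_of_injective {f : G' → H'} (hf : Function.Injective f) (p : G' →₀ ℝ) :
    ent (Finsupp.mapDomain f p) = ent p := by
  classical
  rw [ent, Finsupp.mapDomain_support_of_injective hf, Finset.sum_image
    (fun a _ b _ h => hf h)]
  exact Finset.sum_congr rfl fun x _ => by rw [Finsupp.mapDomain_apply hf]

/-- Jensen / concavity of entropy for finite mixtures. -/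
lemma ent_mixture {ι : Type*} (s : Finset ι) (w : ι → ℝ) (P : ι → (G' →₀ ℝ))
    (hw : ∀ i ∈ s, 0 ≤ w i) (hw1 : ∑ i ∈ s, w i = 1) (hP : ∀ i ∈ s, ∀ x, 0 ≤ P i x) :
    ∑ i ∈ s, w i * ent (P i) ≤ ent (∑ i ∈ s, w i • P i) := by
  classical
  set T := s.biUnion fun i => (P i).support with hT
  have hsub : (∑ i ∈ s, w i • P i).support ⊆ T := by
    refine Finsupp.support_finset_sum.trans ?_
    intro x hx
    rcases Finset.mem_biUnion.1 hx with ⟨i, hi, hxi⟩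
    exact Finset.mem_biUnion.2 ⟨i, hi, Finsupp.support_smul hxi⟩
  have hTi : ∀ i ∈ s, (P i).support ⊆ T := fun i hi => hT ▸ Finset.subset_biUnion_of_mem (fun i => (P i).support) hi
  rw [ent_eq_sum hsub]
  calc ∑ i ∈ s, w i * ent (P i)
      = ∑ i ∈ s, ∑ x ∈ T, w i * Real.negMulLog (P i x) := by
        refine Finset.sum_congr rfl fun i hi => ?_
        rw [ent_eq_sum (hTi i hi), Finset.mul_sum]
    _ = ∑ x ∈ T, ∑ i ∈ s, w i * Real.negMulLog (P i x) := Finset.sum_comm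
    _ ≤ ∑ x ∈ T, Real.negMulLog (∑ i ∈ s, w i * P i x) := by
        refine Finset.sum_le_sum fun x _ => ?_
        have := Real.concaveOn_negMulLog.le_map_sum hw hw1
          (fun i hi => Set.mem_Ici.2 (hP i hi x)) (p := fun i => P i x)
        simpa [smul_eq_mul] using this
    _ = ∑ x ∈ T, Real.negMulLog ((∑ i ∈ s, w i • P i) x) := by
        refine Finset.sum_congr rfl fun x _ => ?_
        rw [Finset.sum_apply']
        simp [Finsupp.smul_apply, smul_eq_mul]

lemma opDist_eq_mix_right [DecidableEq G'] (f : G' → G' → G') (p q : G' →₀ ℝ) :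
    opDist f p q = ∑ b ∈ q.support, q b • Finsupp.mapDomain (fun a => f a b) p := by
  ext x
  rw [opDist_apply, Finset.sum_apply', Finset.sum_product_right]
  refine Finset.sum_congr rfl fun b _ => ?_
  rw [Finsupp.smul_apply, mapDomain_apply_sum _ _ (le_refl p.support), smul_eq_mul,
    Finset.mul_sum]
  refine Finset.sum_congr rfl fun a _ => ?_
  split_ifs with h
  · ring
  · ring

lemma opDist_eq_mix_left [DecidableEq G'] (f : G' → G' → G') (p q : G' →₀ ℝ) :
    opDist f p q = ∑ a ∈ p.support, p a • Finsupp.mapDomain (fun b => f a b) q := by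
  ext x
  rw [opDist_apply, Finset.sum_apply', Finset.sum_product]
  refine Finset.sum_congr rfl fun a _ => ?_
  rw [Finsupp.smul_apply, mapDomain_apply_sum _ _ (le_refl q.support), smul_eq_mul,
    Finset.mul_sum]
  refine Finset.sum_congr rfl fun b _ => ?_
  split_ifs with h
  · ring
  · ring

lemma ent_le_ent_opDist_left {f : G' → G' → G'} {p q : G' →₀ ℝ}
    (hinj : ∀ b, Function.Injective (fun a => f a b)) (hp : IsPMF p) (hq : IsPMF q) :
    ent p ≤ ent (opDist f p q) := by
  classical
  rw [opDist_eq_mix_right]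
  have h := ent_mixture q.support (fun b => q b)
    (fun b => Finsupp.mapDomain (fun a => f a b) p)
    (fun b _ => hq.1 b) hq.2
    (fun b _ x => mapDomain_apply_nonneg hp.1 x)
  calc ent p = ∑ b ∈ q.support, q b * ent p := by
        rw [← Finset.sum_mul, hq.2, one_mul]
    _ = ∑ b ∈ q.support, q b * ent (Finsupp.mapDomain (fun a => f a b) p) := by
        refine Finset.sum_congr rfl fun b _ => ?_
        rw [ent_mapDomain_of_injective (hinj b)]
    _ ≤ _ := h

lemma ent_le_ent_opDist_right {f : G' → G' → G'} {p q : G' →₀ ℝ}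
    (hinj : ∀ a, Function.Injective (fun b => f a b)) (hp : IsPMF p) (hq : IsPMF q) :
    ent q ≤ ent (opDist f p q) := by
  classical
  rw [opDist_eq_mix_left]
  have h := ent_mixture p.support (fun a => p a)
    (fun a => Finsupp.mapDomain (fun b => f a b) q)
    (fun a _ => hp.1 a) hp.2
    (fun a _ x => mapDomain_apply_nonneg hq.1 x)
  calc ent q = ∑ a ∈ p.support, p a * ent q := by
        rw [← Finset.sum_mul, hp.2, one_mul]
    _ = ∑ a ∈ p.support, p a * ent (Finsupp.mapDomain (fun b => f a b) q) := by
        refine Finset.sum_congr rfl fun a _ => ?_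
        rw [ent_mapDomain_of_injective (hinj a)]
    _ ≤ _ := h

section Fibers

variable [DecidableEq H'] (π : G' → H')

lemma condFiber_apply (y : H') (p : G' →₀ ℝ) (x : G') :
    condFiber π y p x = if π x = y then p x / (Finsupp.mapDomain π p) y else 0 := rfl

lemma condFiber_support {y : H'} {p : G' →₀ ℝ}
    (hy : Finsupp.mapDomain π p y ≠ 0) :
    (condFiber π y p).support = p.support.filter (fun x => π x = y) := by
  ext x
  simp only [Finsupp.mem_support_iff, Finset.mem_filter, condFiber_apply]
  constructor
  · intro h
    by_cases hx : π x = y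
    · rw [if_pos hx] at h
      refine ⟨?_, hx⟩
      intro h0
      rw [h0, zero_div] at h
      exact h rfl
    · rw [if_neg hx] at h; exact absurd rfl h
  · rintro ⟨hx0, hx⟩
    rw [if_pos hx]
    exact div_ne_zero hx0 hy

lemma mapDomain_apply_eq_filter_sum (p : G' →₀ ℝ) (y : H') :
    Finsupp.mapDomain π p y = ∑ x ∈ p.support.filter (fun x => π x = y), p x := by
  rw [mapDomain_apply_sum π p (le_refl p.support) y, Finset.sum_filter]

lemma IsPMF.condFiber {y : H'} {p : G' →₀ ℝ} (hp : IsPMF p)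
    (hy : Finsupp.mapDomain π p y ≠ 0) :
    IsPMF (_root_.condFiber π y p) := by
  constructor
  · intro x
    rw [condFiber_apply]
    split_ifs with h
    · exact div_nonneg (hp.1 x) (mapDomain_apply_nonneg hp.1 y)
    · exact le_rfl
  · rw [condFiber_support π hy]
    have : ∀ x ∈ p.support.filter (fun x => π x = y),
        _root_.condFiber π y p x = p x / Finsupp.mapDomain π p y := by
      intro x hx
      rw [condFiber_apply, if_pos (Finset.mem_filter.1 hx).2]
    rw [Finset.sum_congr rfl this, ← Finset.sum_div,
      ← mapDomain_apply_eq_filter_sum π p y, div_self hy]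

lemma smul_condFiber {y : H'} {p : G' →₀ ℝ}
    (hy : Finsupp.mapDomain π p y ≠ 0) (x : G') :
    Finsupp.mapDomain π p y * condFiber π y p x = if π x = y then p x else 0 := by
  rw [condFiber_apply]
  split_ifs with h
  · rw [mul_div_cancel₀ _ hy]
  · rw [mul_zero]

lemma condFiber_nonneg {p : G' →₀ ℝ} (hp : ∀ x, 0 ≤ p x) (y : H') (x : G') :
    0 ≤ condFiber π y p x := by
  rw [condFiber_apply]
  split_ifs with h
  · exact div_nonneg (hp x) (mapDomain_apply_nonneg hp y)
  · exact le_rfl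

lemma mem_support_mapDomain {p : G' →₀ ℝ} (hp : ∀ x, 0 ≤ p x) {x : G'}
    (hx : x ∈ p.support) : π x ∈ (Finsupp.mapDomain π p).support := by
  rw [Finsupp.mem_support_iff]
  have h2 : 0 < p x := lt_of_le_of_ne (hp x) (Ne.symm (Finsupp.mem_support_iff.1 hx))
  exact ne_of_gt (lt_of_lt_of_le h2 (le_mapDomain (f := π) hp x))

/-- Chain rule for entropy. -/
lemma ent_chain {p : G' →₀ ℝ} (hp : IsPMF p) :
    ent p = ent (Finsupp.mapDomain π p) +
      ∑ y ∈ (Finsupp.mapDomain π p).support,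
        (Finsupp.mapDomain π p) y * ent (condFiber π y p) := by
  classical
  set q := Finsupp.mapDomain π p with hq
  have hmaps : ∀ x ∈ p.support, π x ∈ q.support := by
    intro x hx
    rw [Finsupp.mem_support_iff]
    have h1 := le_mapDomain (f := π) hp.1 x
    have h2 : 0 < p x := lt_of_le_of_ne (hp.1 x) (Ne.symm (Finsupp.mem_support_iff.1 hx))
    exact ne_of_gt (lt_of_lt_of_le h2 h1)
  have key : ∀ y ∈ q.support,
      ∑ x ∈ p.support.filter (fun x => π x = y), Real.negMulLog (p x)
        = Real.negMulLog (q y) + q y * ent (condFiber π y p) := by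
    intro y hy
    have hy0 : q y ≠ 0 := Finsupp.mem_support_iff.1 hy
    have hterm : ∀ x ∈ p.support.filter (fun x => π x = y),
        Real.negMulLog (p x) = condFiber π y p x * Real.negMulLog (q y)
          + q y * Real.negMulLog (condFiber π y p x) := by
      intro x hx
      have hπ : π x = y := (Finset.mem_filter.1 hx).2
      have hy0' : Finsupp.mapDomain π p y ≠ 0 := by rwa [hq] at hy0
      have hpx : p x = q y * condFiber π y p x := by
        rw [hq, smul_condFiber π hy0' x, if_pos hπ]
      rw [hpx, Real.negMulLog_mul]
    rw [Finset.sum_congr rfl hterm, Finset.sum_add_distrib, ← Finset.sum_mul,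
      ← Finset.mul_sum]
    congr 1
    · have hmass : ∑ x ∈ p.support.filter (fun x => π x = y), condFiber π y p x = 1 := by
        have := (IsPMF.condFiber π hp hy0).2
        rwa [condFiber_support π hy0] at this
      rw [hmass, one_mul]
    · congr 1
      rw [ent, condFiber_support π hy0]
  calc ent p = ∑ x ∈ p.support, Real.negMulLog (p x) := rfl
    _ = ∑ y ∈ q.support, ∑ x ∈ p.support.filter (fun x => π x = y),
          Real.negMulLog (p x) := (Finset.sum_fiberwise_of_maps_to hmaps _).symm
    _ = ∑ y ∈ q.support, (Real.negMulLog (q y) + q y * ent (condFiber π y p)) :=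
        Finset.sum_congr rfl key
    _ = ent q + ∑ y ∈ q.support, q y * ent (condFiber π y p) := by
        rw [Finset.sum_add_distrib]; rfl

end Fibers

section Main

variable [DecidableEq H'] (π : G' → H') (f : G' → G' → G') (f' : H' → H' → H')

lemma mapDomain_prodPMF (p q : G' →₀ ℝ) :
    Finsupp.mapDomain (Prod.map π π) (prodPMF p q)
      = prodPMF (Finsupp.mapDomain π p) (Finsupp.mapDomain π q) := by
  classical
  ext z
  obtain ⟨y₁, y₂⟩ := z
  rw [mapDomain_apply_sum _ _ (prodPMF_support_subset p q) (y₁, y₂), prodPMF_apply,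
    mapDomain_apply_sum π p (le_refl _) y₁, mapDomain_apply_sum π q (le_refl _) y₂,
    Finset.sum_mul_sum, Finset.sum_product]
  refine Finset.sum_congr rfl fun a _ => Finset.sum_congr rfl fun b _ => ?_
  by_cases h1 : π a = y₁ <;> by_cases h2 : π b = y₂ <;>
    simp [Prod.ext_iff, Prod.map, h1, h2, prodPMF_apply]

lemma mapDomain_opDist (hcomm : ∀ a b, π (f a b) = f' (π a) (π b)) (p q : G' →₀ ℝ) :
    Finsupp.mapDomain π (opDist f p q)
      = opDist f' (Finsupp.mapDomain π p) (Finsupp.mapDomain π q) := by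
  rw [opDist, opDist, ← Finsupp.mapDomain_comp, ← mapDomain_prodPMF π p q,
    ← Finsupp.mapDomain_comp]
  congr 1
  funext z
  exact hcomm z.1 z.2

lemma fiber_decomp [DecidableEq G']
    (hcomm : ∀ a b, π (f a b) = f' (π a) (π b))
    {p₁ p₂ : G' →₀ ℝ} (h₁ : IsPMF p₁) (h₂ : IsPMF p₂) (t : H')
    (ht : opDist f' (Finsupp.mapDomain π p₁) (Finsupp.mapDomain π p₂) t ≠ 0) :
    (opDist f' (Finsupp.mapDomain π p₁) (Finsupp.mapDomain π p₂) t) •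
        condFiber π t (opDist f p₁ p₂)
      = ∑ z ∈ ((Finsupp.mapDomain π p₁).support ×ˢ (Finsupp.mapDomain π p₂).support).filter
            (fun z => f' z.1 z.2 = t),
          ((Finsupp.mapDomain π p₁) z.1 * (Finsupp.mapDomain π p₂) z.2) •
            opDist f (condFiber π z.1 p₁) (condFiber π z.2 p₂) := by
  classical
  set q₁ := Finsupp.mapDomain π p₁ with hq₁
  set q₂ := Finsupp.mapDomain π p₂ with hq₂
  have hr : Finsupp.mapDomain π (opDist f p₁ p₂) = opDist f' q₁ q₂ :=
    mapDomain_opDist π f f' hcomm p₁ p₂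
  ext x
  rw [Finsupp.smul_apply, smul_eq_mul, condFiber_apply, hr, Finset.sum_apply']
  have step1 : ∀ z ∈ (q₁.support ×ˢ q₂.support).filter (fun z => f' z.1 z.2 = t),
      ((q₁ z.1 * q₂ z.2) • opDist f (condFiber π z.1 p₁) (condFiber π z.2 p₂)) x
        = ∑ w ∈ (p₁.support.filter (fun a => π a = z.1)) ×ˢ
            (p₂.support.filter (fun b => π b = z.2)),
            if f w.1 w.2 = x then p₁ w.1 * p₂ w.2 else 0 := by
    intro z hz
    obtain ⟨hz1, -⟩ := Finset.mem_filter.1 hz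
    obtain ⟨hy₁, hy₂⟩ := Finset.mem_product.1 hz1
    have h10' : Finsupp.mapDomain π p₁ z.1 ≠ 0 := by
      rw [← hq₁]; exact Finsupp.mem_support_iff.1 hy₁
    have h20' : Finsupp.mapDomain π p₂ z.2 ≠ 0 := by
      rw [← hq₂]; exact Finsupp.mem_support_iff.1 hy₂
    rw [Finsupp.smul_apply, smul_eq_mul, opDist_apply,
      condFiber_support π h10', condFiber_support π h20', Finset.mul_sum]
    refine Finset.sum_congr rfl fun w hw => ?_
    obtain ⟨hw1, hw2⟩ := Finset.mem_product.1 hw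
    have ha : π w.1 = z.1 := (Finset.mem_filter.1 hw1).2
    have hb : π w.2 = z.2 := (Finset.mem_filter.1 hw2).2
    have e1 : q₁ z.1 * condFiber π z.1 p₁ w.1 = p₁ w.1 := by
      rw [hq₁, smul_condFiber π h10' w.1, if_pos ha]
    have e2 : q₂ z.2 * condFiber π z.2 p₂ w.2 = p₂ w.2 := by
      rw [hq₂, smul_condFiber π h20' w.2, if_pos hb]
    split_ifs with h
    · rw [← e1, ← e2]; ring
    · rw [mul_zero]
  rw [Finset.sum_congr rfl step1]
  have hmaps : ∀ w ∈ (p₁.support ×ˢ p₂.support).filter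
      (fun w => f' (π w.1) (π w.2) = t),
      (π w.1, π w.2) ∈ (q₁.support ×ˢ q₂.support).filter (fun z => f' z.1 z.2 = t) := by
    intro w hw
    obtain ⟨hw1, hw2⟩ := Finset.mem_filter.1 hw
    obtain ⟨ha, hb⟩ := Finset.mem_product.1 hw1
    exact Finset.mem_filter.2 ⟨Finset.mem_product.2
      ⟨mem_support_mapDomain π h₁.1 ha, mem_support_mapDomain π h₂.1 hb⟩, hw2⟩
  have hsets : ∀ z ∈ (q₁.support ×ˢ q₂.support).filter (fun z => f' z.1 z.2 = t),
      ((p₁.support ×ˢ p₂.support).filter (fun w => f' (π w.1) (π w.2) = t)).filter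
          (fun w => (π w.1, π w.2) = z)
        = (p₁.support.filter (fun a => π a = z.1)) ×ˢ
            (p₂.support.filter (fun b => π b = z.2)) := by
    intro z hz
    have hzt : f' z.1 z.2 = t := (Finset.mem_filter.1 hz).2
    ext w
    simp only [Finset.mem_filter, Finset.mem_product, Prod.ext_iff]
    constructor
    · rintro ⟨⟨⟨ha, hb⟩, -⟩, hp1, hp2⟩
      exact ⟨⟨ha, hp1⟩, hb, hp2⟩
    · rintro ⟨⟨ha, hp1⟩, hb, hp2⟩
      exact ⟨⟨⟨ha, hb⟩, by rw [hp1, hp2, hzt]⟩, hp1, hp2⟩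
  have step2 := Finset.sum_fiberwise_of_maps_to hmaps
    (fun w => if f w.1 w.2 = x then p₁ w.1 * p₂ w.2 else 0)
  have step3 : ∑ z ∈ (q₁.support ×ˢ q₂.support).filter (fun z => f' z.1 z.2 = t),
      ∑ w ∈ (p₁.support.filter (fun a => π a = z.1)) ×ˢ
          (p₂.support.filter (fun b => π b = z.2)),
          (if f w.1 w.2 = x then p₁ w.1 * p₂ w.2 else 0)
      = ∑ w ∈ (p₁.support ×ˢ p₂.support).filter
          (fun w => f' (π w.1) (π w.2) = t),
          (if f w.1 w.2 = x then p₁ w.1 * p₂ w.2 else 0) := by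
    rw [← step2]
    exact Finset.sum_congr rfl fun z hz => by rw [hsets z hz]
  rw [step3]
  by_cases hx : π x = t
  · rw [if_pos hx, mul_comm, div_mul_cancel₀ _ ht, opDist_apply, Finset.sum_filter]
    refine Finset.sum_congr rfl fun w hw => ?_
    by_cases hfw : f w.1 w.2 = x
    · have hft : f' (π w.1) (π w.2) = t := by rw [← hcomm, hfw, hx]
      simp [hfw, hft]
    · simp [hfw]
  · rw [if_neg hx, mul_zero]
    symm
    refine Finset.sum_eq_zero fun w hw => ?_
    rw [if_neg]
    intro hfw
    exact hx (by rw [← hfw, hcomm, (Finset.mem_filter.1 hw).2])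

/-- The main inequality, for a general pair of compatible binary operations. -/
lemma main_ineq (hcomm : ∀ a b, π (f a b) = f' (π a) (π b))
    {p₁ p₂ : G' →₀ ℝ} (h₁ : IsPMF p₁) (h₂ : IsPMF p₂) :
    ent (opDist f' (Finsupp.mapDomain π p₁) (Finsupp.mapDomain π p₂)) +
      ∑ y₁ ∈ (Finsupp.mapDomain π p₁).support, ∑ y₂ ∈ (Finsupp.mapDomain π p₂).support,
        (Finsupp.mapDomain π p₁) y₁ * (Finsupp.mapDomain π p₂) y₂ *
          ent (opDist f (condFiber π y₁ p₁) (condFiber π y₂ p₂))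
      ≤ ent (opDist f p₁ p₂) := by
  classical
  set q₁ := Finsupp.mapDomain π p₁ with hq₁
  set q₂ := Finsupp.mapDomain π p₂ with hq₂
  have hq₁pmf : IsPMF q₁ := h₁.mapDomain
  have hq₂pmf : IsPMF q₂ := h₂.mapDomain
  have hrpmf : IsPMF (opDist f' q₁ q₂) := hq₁pmf.opDist hq₂pmf
  have hs : IsPMF (opDist f p₁ p₂) := h₁.opDist h₂
  have hr : Finsupp.mapDomain π (opDist f p₁ p₂) = opDist f' q₁ q₂ :=
    mapDomain_opDist π f f' hcomm p₁ p₂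
  have hchain := ent_chain π hs
  rw [hr] at hchain
  rw [hchain]
  have key : ∑ y₁ ∈ q₁.support, ∑ y₂ ∈ q₂.support, q₁ y₁ * q₂ y₂ *
        ent (opDist f (condFiber π y₁ p₁) (condFiber π y₂ p₂))
      ≤ ∑ t ∈ (opDist f' q₁ q₂).support, (opDist f' q₁ q₂) t *
          ent (condFiber π t (opDist f p₁ p₂)) := by
    have hmaps : ∀ z ∈ q₁.support ×ˢ q₂.support,
        f' z.1 z.2 ∈ (opDist f' q₁ q₂).support := by
      intro z hz
      obtain ⟨hz1, hz2⟩ := Finset.mem_product.1 hz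
      rw [Finsupp.mem_support_iff]
      have hterm : 0 < q₁ z.1 * q₂ z.2 := by
        have := mul_nonneg (hq₁pmf.1 z.1) (hq₂pmf.1 z.2)
        rcases this.lt_or_eq with h | h
        · exact h
        · exact absurd h.symm (mul_ne_zero (Finsupp.mem_support_iff.1 hz1)
            (Finsupp.mem_support_iff.1 hz2))
      have hle : q₁ z.1 * q₂ z.2 ≤ (opDist f' q₁ q₂) (f' z.1 z.2) := by
        rw [opDist_apply]
        have hnn : ∀ w ∈ q₁.support ×ˢ q₂.support,
            0 ≤ (if f' w.1 w.2 = f' z.1 z.2 then q₁ w.1 * q₂ w.2 else 0) := by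
          intro w _
          split_ifs with hww
          · exact mul_nonneg (hq₁pmf.1 w.1) (hq₂pmf.1 w.2)
          · exact le_rfl
        have := Finset.single_le_sum (f := fun w =>
            if f' w.1 w.2 = f' z.1 z.2 then q₁ w.1 * q₂ w.2 else 0) hnn hz
        simpa using this
      exact ne_of_gt (lt_of_lt_of_le hterm hle)
    rw [← Finset.sum_product']
    rw [← Finset.sum_fiberwise_of_maps_to hmaps (fun z => q₁ z.1 * q₂ z.2 *
      ent (opDist f (condFiber π z.1 p₁) (condFiber π z.2 p₂)))]
    refine Finset.sum_le_sum fun t ht => ?_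
    have hrt0 : (opDist f' q₁ q₂) t ≠ 0 := Finsupp.mem_support_iff.1 ht
    have hrtpos : 0 < (opDist f' q₁ q₂) t :=
      lt_of_le_of_ne (hrpmf.1 t) (Ne.symm hrt0)
    set rt := (opDist f' q₁ q₂) t with hrt
    set Fl := (q₁.support ×ˢ q₂.support).filter (fun z => f' z.1 z.2 = t) with hFl
    have hsum_w : ∑ z ∈ Fl, q₁ z.1 * q₂ z.2 = rt := by
      rw [hrt, opDist_apply, Finset.sum_filter]
    have hdecomp := fiber_decomp π f f' hcomm h₁ h₂ t hrt0
    have hcond : condFiber π t (opDist f p₁ p₂)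
        = ∑ z ∈ Fl, ((q₁ z.1 * q₂ z.2) / rt) •
            opDist f (condFiber π z.1 p₁) (condFiber π z.2 p₂) := by
      have h2 := congrArg (fun v => rt⁻¹ • v) hdecomp
      rw [inv_smul_smul₀ hrt0] at h2
      rw [h2, Finset.smul_sum]
      refine Finset.sum_congr rfl fun z _ => ?_
      rw [smul_smul, div_eq_mul_inv, mul_comm (q₁ z.1 * q₂ z.2) rt⁻¹]
    have jensen := ent_mixture Fl (fun z => (q₁ z.1 * q₂ z.2) / rt)
      (fun z => opDist f (condFiber π z.1 p₁) (condFiber π z.2 p₂))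
      (fun z _ => div_nonneg (mul_nonneg (hq₁pmf.1 z.1) (hq₂pmf.1 z.2)) hrtpos.le)
      (by rw [← Finset.sum_div, hsum_w, div_self hrt0])
      (fun z _ x => by
        exact mapDomain_apply_nonneg (fun w =>
          mul_nonneg (condFiber_nonneg π h₁.1 z.1 w.1) (condFiber_nonneg π h₂.1 z.2 w.2)) x)
    rw [← hcond] at jensen
    calc ∑ z ∈ Fl, q₁ z.1 * q₂ z.2 *
          ent (opDist f (condFiber π z.1 p₁) (condFiber π z.2 p₂))
        = rt * ∑ z ∈ Fl, (q₁ z.1 * q₂ z.2) / rt *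
            ent (opDist f (condFiber π z.1 p₁) (condFiber π z.2 p₂)) := by
          rw [Finset.mul_sum]
          refine Finset.sum_congr rfl fun z _ => ?_
          field_simp
      _ ≤ rt * ent (condFiber π t (opDist f p₁ p₂)) :=
          mul_le_mul_of_nonneg_left jensen hrtpos.le
  linarith [key]

end Main

lemma dEnt_nonneg {G : Type*} [AddCommGroup G] {p q : G →₀ ℝ}
    (hp : IsPMF p) (hq : IsPMF q) : 0 ≤ dEnt p q := by
  have h1 : ent p ≤ ent (opDist (fun a b => a - b) p q) :=
    ent_le_ent_opDist_left (fun b a a' h => by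
      have : a - b = a' - b := h
      exact sub_left_inj.1 this) hp hq
  have h2 : ent q ≤ ent (opDist (fun a b => a - b) p q) :=
    ent_le_ent_opDist_right (fun a b b' h => by
      have : a - b = a - b' := h
      exact sub_right_inj.1 this) hp hq
  rw [dEnt, subDist_eq_opDist]
  linarith

lemma double_sum_weights {ι κ : Type*} (s : Finset ι) (t : Finset κ) (u : ι → ℝ) (v : κ → ℝ)
    (hu : ∑ i ∈ s, u i = 1) (hv : ∑ j ∈ t, v j = 1) (E : ι → κ → ℝ) (a : ι → ℝ) (b : κ → ℝ) :
    ∑ i ∈ s, ∑ j ∈ t, u i * v j * (E i j - a i / 2 - b j / 2)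
      = (∑ i ∈ s, ∑ j ∈ t, u i * v j * E i j)
        - (∑ i ∈ s, u i * a i) / 2 - (∑ j ∈ t, v j * b j) / 2 := by
  have inner : ∀ i ∈ s, ∑ j ∈ t, u i * v j * (E i j - a i / 2 - b j / 2)
      = (∑ j ∈ t, u i * v j * E i j) - u i * a i / 2
        - u i * (∑ j ∈ t, v j * b j) / 2 := by
    intro i _
    have h1 : ∑ j ∈ t, u i * v j * (E i j - a i / 2 - b j / 2)
        = ∑ j ∈ t, (u i * v j * E i j - v j * (u i * a i / 2)
            - (u i / 2) * (v j * b j)) :=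
      Finset.sum_congr rfl fun j _ => by ring
    rw [h1, Finset.sum_sub_distrib, Finset.sum_sub_distrib, ← Finset.sum_mul, hv,
      one_mul, ← Finset.mul_sum]
    ring
  rw [Finset.sum_congr rfl inner, Finset.sum_sub_distrib, Finset.sum_sub_distrib]
  have h2 : ∑ i ∈ s, u i * a i / 2 = (∑ i ∈ s, u i * a i) / 2 := by
    rw [← Finset.sum_div]
  have h3 : ∑ i ∈ s, u i * (∑ j ∈ t, v j * b j) / 2
      = (∑ j ∈ t, v j * b j) / 2 := by
    rw [← Finset.sum_div, ← Finset.sum_mul, hu, one_mul]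
  rw [h2, h3]

end AuxStatement5


/-- Let `π : G → H` be a homomorphism of abelian groups, let `X₁ ~ p₁`,
`X₂ ~ p₂` be random variables taking values in finite subsets of `G`, and let
`Y₁ = π(X₁)`, `Y₂ = π(X₂)`. Then
`d_ent(X₁, X₂) ≥ d_ent(Y₁, Y₂) + Σ_{y₁,y₂} P(Y₁=y₁) P(Y₂=y₂) d_ent((X₁|Y₁=y₁), (X₂|Y₂=y₂))`;
in particular `d_ent(X₁, X₂) ≥ d_ent(Y₁, Y₂)`, and `σ_ent[π(X)] ≤ σ_ent[X]` for every `X`. -/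
theorem statement5 {G H : Type*} [AddCommGroup G] [AddCommGroup H] [DecidableEq H]
    (π : G →+ H) (p₁ p₂ : G →₀ ℝ) (h₁ : IsPMF p₁) (h₂ : IsPMF p₂) :
    (dEnt (Finsupp.mapDomain π p₁) (Finsupp.mapDomain π p₂) +
      ∑ y₁ ∈ (Finsupp.mapDomain π p₁).support, ∑ y₂ ∈ (Finsupp.mapDomain π p₂).support,
        (Finsupp.mapDomain π p₁) y₁ * (Finsupp.mapDomain π p₂) y₂ *
          dEnt (condFiber π y₁ p₁) (condFiber π y₂ p₂)
      ≤ dEnt p₁ p₂) ∧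
    dEnt (Finsupp.mapDomain π p₁) (Finsupp.mapDomain π p₂) ≤ dEnt p₁ p₂ ∧
    (∀ p : G →₀ ℝ, IsPMF p → sigmaEnt (Finsupp.mapDomain π p) ≤ sigmaEnt p) := by
  classical
  have hq₁pmf : IsPMF (Finsupp.mapDomain (⇑π) p₁) := h₁.mapDomain
  have hq₂pmf : IsPMF (Finsupp.mapDomain (⇑π) p₂) := h₂.mapDomain
  have hmain := main_ineq (⇑π) (fun a b => a - b) (fun a b => a - b)
    (fun a b => map_sub π a b) h₁ h₂
  simp only [← subDist_eq_opDist] at hmain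
  have hch₁ := ent_chain (⇑π) h₁
  have hch₂ := ent_chain (⇑π) h₂
  have hdouble := double_sum_weights (Finsupp.mapDomain (⇑π) p₁).support
    (Finsupp.mapDomain (⇑π) p₂).support (fun y => Finsupp.mapDomain (⇑π) p₁ y)
    (fun y => Finsupp.mapDomain (⇑π) p₂ y) hq₁pmf.2 hq₂pmf.2
    (fun y₁ y₂ => ent (subDist (condFiber (⇑π) y₁ p₁) (condFiber (⇑π) y₂ p₂)))
    (fun y₁ => ent (condFiber (⇑π) y₁ p₁)) (fun y₂ => ent (condFiber (⇑π) y₂ p₂))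
  have hg1 : dEnt (Finsupp.mapDomain π p₁) (Finsupp.mapDomain π p₂) +
      ∑ y₁ ∈ (Finsupp.mapDomain π p₁).support, ∑ y₂ ∈ (Finsupp.mapDomain π p₂).support,
        (Finsupp.mapDomain π p₁) y₁ * (Finsupp.mapDomain π p₂) y₂ *
          dEnt (condFiber π y₁ p₁) (condFiber π y₂ p₂)
      ≤ dEnt p₁ p₂ := by
    simp only [dEnt]
    rw [hdouble]
    linarith
  refine ⟨hg1, ?_, ?_⟩
  · have hnn : 0 ≤ ∑ y₁ ∈ (Finsupp.mapDomain π p₁).support,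
        ∑ y₂ ∈ (Finsupp.mapDomain π p₂).support,
        (Finsupp.mapDomain π p₁) y₁ * (Finsupp.mapDomain π p₂) y₂ *
          dEnt (condFiber π y₁ p₁) (condFiber π y₂ p₂) := by
      refine Finset.sum_nonneg fun y₁ hy₁ => Finset.sum_nonneg fun y₂ hy₂ => ?_
      refine mul_nonneg (mul_nonneg (hq₁pmf.1 y₁) (hq₂pmf.1 y₂)) ?_
      exact dEnt_nonneg (IsPMF.condFiber (⇑π) h₁ (Finsupp.mem_support_iff.1 hy₁))
        (IsPMF.condFiber (⇑π) h₂ (Finsupp.mem_support_iff.1 hy₂))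
    linarith
  · intro p hp
    have hqpmf : IsPMF (Finsupp.mapDomain (⇑π) p) := hp.mapDomain
    have hmainp := main_ineq (⇑π) (fun a b => a + b) (fun a b => a + b)
      (fun a b => map_add π a b) hp hp
    have hch := ent_chain (⇑π) hp
    have hbound : ∀ y₁ ∈ (Finsupp.mapDomain (⇑π) p).support,
        ∀ y₂ ∈ (Finsupp.mapDomain (⇑π) p).support,
        ent (condFiber (⇑π) y₁ p) ≤
          ent (opDist (fun a b => a + b) (condFiber (⇑π) y₁ p) (condFiber (⇑π) y₂ p)) := by
      intro y₁ hy₁ y₂ hy₂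
      refine ent_le_ent_opDist_left (fun b a a' h => ?_)
        (IsPMF.condFiber (⇑π) hp (Finsupp.mem_support_iff.1 hy₁))
        (IsPMF.condFiber (⇑π) hp (Finsupp.mem_support_iff.1 hy₂))
      have : a + b = a' + b := h
      exact (add_left_inj b).1 this
    have h5 : ∑ y₁ ∈ (Finsupp.mapDomain (⇑π) p).support,
        (Finsupp.mapDomain (⇑π) p) y₁ * ent (condFiber (⇑π) y₁ p)
        ≤ ∑ y₁ ∈ (Finsupp.mapDomain (⇑π) p).support,
          ∑ y₂ ∈ (Finsupp.mapDomain (⇑π) p).support,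
          (Finsupp.mapDomain (⇑π) p) y₁ * (Finsupp.mapDomain (⇑π) p) y₂ *
            ent (opDist (fun a b => a + b) (condFiber (⇑π) y₁ p) (condFiber (⇑π) y₂ p)) := by
      have heq : ∀ y₁ ∈ (Finsupp.mapDomain (⇑π) p).support,
          (Finsupp.mapDomain (⇑π) p) y₁ * ent (condFiber (⇑π) y₁ p)
            = ∑ y₂ ∈ (Finsupp.mapDomain (⇑π) p).support,
              (Finsupp.mapDomain (⇑π) p) y₁ * (Finsupp.mapDomain (⇑π) p) y₂ *
                ent (condFiber (⇑π) y₁ p) := by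
        intro y₁ _
        have : ∑ y₂ ∈ (Finsupp.mapDomain (⇑π) p).support,
            (Finsupp.mapDomain (⇑π) p) y₁ * (Finsupp.mapDomain (⇑π) p) y₂ *
              ent (condFiber (⇑π) y₁ p)
            = ((Finsupp.mapDomain (⇑π) p) y₁ * ent (condFiber (⇑π) y₁ p)) *
              ∑ y₂ ∈ (Finsupp.mapDomain (⇑π) p).support,
                (Finsupp.mapDomain (⇑π) p) y₂ := by
          rw [Finset.mul_sum]
          exact Finset.sum_congr rfl fun y₂ _ => by ring
        rw [this, hqpmf.2, mul_one]
      rw [Finset.sum_congr rfl heq]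
      refine Finset.sum_le_sum fun y₁ hy₁ => Finset.sum_le_sum fun y₂ hy₂ => ?_
      exact mul_le_mul_of_nonneg_left (hbound y₁ hy₁ y₂ hy₂)
        (mul_nonneg (hqpmf.1 y₁) (hqpmf.1 y₂))
    rw [sigmaEnt, sigmaEnt, Real.exp_le_exp, sumDist_eq_opDist, sumDist_eq_opDist]
    linarith

end
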